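/- Let W = W₁W₂ be an unbordered word of even length 2n over an arbitrary alphabet, where |W₁| = |W₂| = n. Then for every letter c, the word W₁cW₂ (of length 2n+1, obtained by inserting c in the middle of W) is unbordered. -/

import Mathlib

/-- `B` is a border of the word `W`: a nonempty proper suffix of `W`
(proper meaning of length strictly less than `|W|`) that is also a prefix of `W`. -/
def IsBorder {α : Type*} (B W : List α) : Prop :=
  B ≠ [] ∧ B.length < W.length ∧ B <:+ W ∧ B <+: W

/-- A word is unbordered if it has no border. -/
def Unbordered {α : Type*} (W : List α) : Prop :=
  ∀ B, ¬ IsBorder B W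

/-- If a word has "period equation" `take k = drop p`, it also satisfies
`take (k - p) = drop (p + p)` (the border of a long border is a border). -/
lemma border_reduce {α : Type*} (w : List α) (p k : ℕ) (h : w.take k = w.drop p) :
    w.take (k - p) = w.drop (p + p) := by
  rw [← List.drop_drop, ← h, List.drop_take, ← h, List.take_take,
    Nat.min_eq_left (Nat.sub_le k p)]

/-- If `W = W₁W₂` is an unbordered word of even length `2n` with `|W₁| = |W₂| = n`, then
for every letter `c` the word `W₁cW₂` is unbordered. -/
theorem unbordered_insert_middle_even {α : Type*} (n : ℕ) (W₁ W₂ : List α)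
    (h₁ : W₁.length = n) (h₂ : W₂.length = n)
    (hW : Unbordered (W₁ ++ W₂)) (c : α) :
    Unbordered (W₁ ++ [c] ++ W₂) := by
  set w : List α := W₁ ++ [c] ++ W₂ with hw
  have hwlen : w.length = 2 * n + 1 := by
    simp [hw, h₁, h₂]; omega
  -- key claim, by strong induction on k
  have key : ∀ k, k ≠ 0 → k ≤ 2 * n → w.take k ≠ w.drop (2 * n + 1 - k) := by
    intro k
    induction k using Nat.strong_induction_on with
    | _ k ih =>
      intro hk0 hk2n h
      by_cases hkn : k ≤ n
      · -- a border of length ≤ n yields a border of W₁ ++ W₂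
        have hn1 : 1 ≤ n := by omega
        have htake : w.take k = W₁.take k := by
          rw [hw, List.append_assoc, List.take_append_of_le_length (by omega)]
        have hdrop : w.drop (2 * n + 1 - k) = W₂.drop (n - k) := by
          have : 2 * n + 1 - k = (W₁ ++ [c]).length + (n - k) := by
            simp [h₁]; omega
          rw [hw, this, List.drop_length_add_append]
        apply hW (W₁.take k)
        refine ⟨?_, ?_, ?_, ?_⟩
        · intro hnil
          have := congrArg List.length hnil
          simp [Nat.min_eq_left (h₁ ▸ hkn)] at this
          omega
        · simp [Nat.min_eq_left (h₁ ▸ hkn), h₁, h₂]; omega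
        · rw [← htake, h, hdrop]
          exact (W₂.drop_suffix _).trans (List.suffix_append _ _)
        · exact (W₁.take_prefix _).trans (List.prefix_append _ _)
      · -- a long border reduces to a shorter one
        push_neg at hkn
        have hred := border_reduce w (2 * n + 1 - k) k h
        have h1 : k - (2 * n + 1 - k) = 2 * k - (2 * n + 1) := by omega
        have h2 : (2 * n + 1 - k) + (2 * n + 1 - k) = 2 * n + 1 - (2 * k - (2 * n + 1)) := by
          omega
        rw [h1, h2] at hred
        exact ih (2 * k - (2 * n + 1)) (by omega) (by omega) (by omega) hred
  intro B hB
  obtain ⟨hne, hlt, hsuf, hpre⟩ := hB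
  have hBlen : B.length ≠ 0 := by simpa using hne
  have hBle : B.length ≤ 2 * n := by omega
  apply key B.length hBlen hBle
  rw [← List.prefix_iff_eq_take.mp hpre, ← hwlen, ← List.suffix_iff_eq_drop.mp hsuf]
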